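/- Let G be a group, H a subgroup of G, and S, T subsets of G. Write H·S for the set {h*s : h ∈ H, s ∈ S}. Suppose that for every σ ∈ S and every τ ∈ T the product σ*τ lies in H·S. Then for every α ∈ H·S and every β in the submonoid of G generated by T (i.e., every β expressible as a finite, possibly empty, product of elements of T), the product α*β lies in H·S. -/
import Mathlib


/-- If every product `σ * τ` with `σ ∈ S`, `τ ∈ T` lies in `H·S = {h * s : h ∈ H, s ∈ S}`,
then `H·S` is closed under right multiplication by any finite product of elements of `T`. -/
theorem stmt_0 {G : Type*} [Group G] (H : Subgroup G) (S T : Set G)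
    (hST : ∀ σ ∈ S, ∀ τ ∈ T, ∃ h ∈ H, ∃ s ∈ S, σ * τ = h * s) :
    ∀ α, (∃ h ∈ H, ∃ s ∈ S, α = h * s) →
      ∀ β ∈ Submonoid.closure T, ∃ h ∈ H, ∃ s ∈ S, α * β = h * s := by
  have key : ∀ β ∈ Submonoid.closure T,
      ∀ α, (∃ h ∈ H, ∃ s ∈ S, α = h * s) → ∃ h ∈ H, ∃ s ∈ S, α * β = h * s := by
    intro β hβ
    induction hβ using Submonoid.closure_induction with
    | mem τ hτ =>
      rintro α ⟨h, hh, s, hs, rfl⟩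
      obtain ⟨h', hh', s', hs', he⟩ := hST s hs τ hτ
      exact ⟨h * h', H.mul_mem hh hh', s', hs', by rw [mul_assoc, he, mul_assoc]⟩
    | one =>
      rintro α hα
      simpa using hα
    | mul x y hx hy ihx ihy =>
      intro α hα
      obtain ⟨h, hh, s, hs, he⟩ := ihx α hα
      obtain ⟨h', hh', s', hs', he'⟩ := ihy (h * s) ⟨h, hh, s, hs, rfl⟩
      exact ⟨h', hh', s', hs', by rw [← mul_assoc, he, he']⟩
  exact fun α hα β hβ => key β hβ α hα
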